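/- Let u : ℝ^d → ℝ be measurable with ∫ |u|^2 dx = 1, S := ∫ |u|^2 log|u|^2 dx finite, and K := ∫ |x|^2 |u|^2 dx finite. Then |u|^2 log|u|^2 ∈ L^1(ℝ^d) and ∫ | |u|^2 log|u|^2 | dx ≤ S + K + d log(2π) + 2/e. -/

import Mathlib

open MeasureTheory Real

lemma neg_part_entropy_bound (t a : ℝ) (ht : 0 ≤ t) (ha : 0 ≤ a) :
    max (-(t * Real.log t)) 0 ≤ a * t + Real.exp (-a - 1) := by
  have hc : (0:ℝ) < Real.exp (-a-1) := Real.exp_pos _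
  rcases eq_or_lt_of_le ht with h | h
  · simp [← h]
    positivity
  · apply max_le _ (by positivity)
    have h2 := Real.log_le_sub_one_of_pos (show 0 < Real.exp (-a-1) / t by positivity)
    rw [Real.log_div (ne_of_gt hc) (ne_of_gt h), Real.log_exp] at h2
    have h4 := mul_le_mul_of_nonneg_left h2 ht
    have h3 : t * (Real.exp (-a-1)/t) = Real.exp (-a-1) := mul_div_cancel₀ _ (ne_of_gt h)
    nlinarith [Real.exp_pos (-a-1)]

lemma gaussian_int_euclidean (d : ℕ) :
    Integrable (fun x : EuclideanSpace ℝ (Fin d) => Real.exp (-(1/2) * ‖x‖^2)) := by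
  have h := (GaussianFourier.integrable_cexp_neg_mul_sq_norm_add
    (V := EuclideanSpace ℝ (Fin d)) (b := (1/2 : ℂ)) (by norm_num) 0 0).norm
  convert h using 2 with x
  rw [Complex.norm_exp]
  norm_num
  rw [← Complex.ofReal_pow, Complex.ofReal_re]

lemma gaussian_val_euclidean (d : ℕ) :
    ∫ x : EuclideanSpace ℝ (Fin d), Real.exp (-(1/2) * ‖x‖^2)
      = (2 * Real.pi) ^ ((d : ℝ)/2) := by
  rw [GaussianFourier.integral_rexp_neg_mul_sq_norm (by norm_num : (0:ℝ) < 1/2)]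
  rw [finrank_euclideanSpace_fin]
  norm_num
  ring_nf

theorem stmt_4 (d : ℕ) (u : EuclideanSpace ℝ (Fin d) → ℝ)
    (hmeas : Measurable u)
    (hnorm : ∫ x, u x ^ 2 = 1)
    (hS : Integrable (fun x => u x ^ 2 * Real.log (u x ^ 2)))
    (hK : Integrable (fun x => ‖x‖ ^ 2 * u x ^ 2)) :
    Integrable (fun x => |u x ^ 2 * Real.log (u x ^ 2)|) ∧
    ∫ x, |u x ^ 2 * Real.log (u x ^ 2)|
      ≤ (∫ x, u x ^ 2 * Real.log (u x ^ 2)) + (∫ x, ‖x‖ ^ 2 * u x ^ 2)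
        + d * Real.log (2 * Real.pi) + 2 / Real.exp 1 := by
  have h2pi : (0:ℝ) < 2 * Real.pi := by positivity
  have hlogpi : 0 ≤ Real.log (2 * Real.pi) :=
    Real.log_nonneg (by nlinarith [Real.pi_gt_three])
  have hf_int : Integrable (fun x : EuclideanSpace ℝ (Fin d) => u x ^ 2) := by
    by_contra h
    rw [integral_undef h] at hnorm
    norm_num at hnorm
  refine ⟨hS.abs, ?_⟩
  set F := fun x : EuclideanSpace ℝ (Fin d) => u x ^ 2 * Real.log (u x ^ 2) with hF
  set N := fun x : EuclideanSpace ℝ (Fin d) => max (-(F x)) 0 with hNdef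
  have hNint : Integrable N := hS.neg.sup (integrable_zero _ _ _)
  have habs : ∀ x, |F x| = F x + 2 * N x := by
    intro x
    have hNx : N x = max (-(F x)) 0 := rfl
    rcases le_total (F x) 0 with h | h
    · rw [abs_of_nonpos h, hNx, max_eq_left (by linarith)]; ring
    · rw [abs_of_nonneg h, hNx, max_eq_right (by linarith)]; ring
  set C := Real.exp (-1) * (2 * Real.pi) ^ (-(d:ℝ)/2) with hC
  set G := fun x : EuclideanSpace ℝ (Fin d) =>
      (1/2) * (‖x‖^2 * u x ^ 2) + ((d:ℝ) * Real.log (2*Real.pi) / 2) * u x ^ 2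
        + C * Real.exp (-(1/2) * ‖x‖^2) with hG
  have hGint : Integrable G :=
    ((hK.const_mul (1/2)).add (hf_int.const_mul ((d:ℝ) * Real.log (2*Real.pi) / 2))).add
      ((gaussian_int_euclidean d).const_mul C)
  have hpt : ∀ x, N x ≤ G x := by
    intro x
    have ha : 0 ≤ ‖x‖^2/2 + (d:ℝ) * Real.log (2*Real.pi) / 2 := by positivity
    have h1 := neg_part_entropy_bound (u x ^ 2)
      (‖x‖^2/2 + (d:ℝ) * Real.log (2*Real.pi) / 2) (by positivity) ha
    have hexp : Real.exp (-(‖x‖^2/2 + (d:ℝ) * Real.log (2*Real.pi) / 2) - 1)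
        = C * Real.exp (-(1/2) * ‖x‖^2) := by
      rw [hC, Real.rpow_def_of_pos h2pi, ← Real.exp_add, ← Real.exp_add]
      congr 1
      ring
    rw [hexp] at h1
    refine le_trans h1 (le_of_eq ?_)
    simp only [hG]
    ring
  have hNle : ∫ x, N x ≤ ∫ x, G x := integral_mono hNint hGint hpt
  have hGval : ∫ x, G x = (1/2) * (∫ x, ‖x‖ ^ 2 * u x ^ 2)
      + (d:ℝ) * Real.log (2*Real.pi) / 2 + 1 / Real.exp 1 := by
    have hi1 : Integrable (fun x : EuclideanSpace ℝ (Fin d) =>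
        (1:ℝ)/2 * (‖x‖^2 * u x ^ 2) + (d:ℝ) * Real.log (2*Real.pi) / 2 * u x ^ 2) :=
      (hK.const_mul ((1:ℝ)/2)).add
        (hf_int.const_mul ((d:ℝ) * Real.log (2*Real.pi) / 2))
    have hi2 : Integrable (fun x : EuclideanSpace ℝ (Fin d) =>
        C * Real.exp (-(1/2) * ‖x‖^2)) := (gaussian_int_euclidean d).const_mul C
    rw [hG, integral_add hi1 hi2,
      integral_add (hK.const_mul ((1:ℝ)/2))
        (hf_int.const_mul ((d:ℝ) * Real.log (2*Real.pi) / 2)),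
      integral_const_mul, integral_const_mul, integral_const_mul, hnorm,
      gaussian_val_euclidean d, hC]
    have : Real.exp (-1) * (2 * Real.pi) ^ (-(d:ℝ)/2) * (2 * Real.pi) ^ ((d:ℝ)/2)
        = 1 / Real.exp 1 := by
      rw [mul_assoc, ← Real.rpow_add h2pi,
        show (-(d:ℝ)/2 + (d:ℝ)/2) = 0 by ring, Real.rpow_zero, mul_one,
        Real.exp_neg, one_div]
    rw [this]
    ring
  have key : ∫ x, |F x| = (∫ x, F x) + 2 * ∫ x, N x := by
    calc ∫ x, |F x| = ∫ x, (F x + 2 * N x) := by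
          apply integral_congr_ae
          filter_upwards with x using habs x
      _ = (∫ x, F x) + 2 * ∫ x, N x := by
          rw [integral_add hS (hNint.const_mul 2), integral_const_mul]
  show ∫ x, |F x| ≤ (∫ x, F x) + (∫ x, ‖x‖ ^ 2 * u x ^ 2) + d * Real.log (2 * Real.pi)
        + 2 / Real.exp 1
  rw [key]
  have hNG := hGval ▸ hNle
  have h2e : (2:ℝ) / Real.exp 1 = 2 * (1 / Real.exp 1) := by ring
  linarith [hNG, h2e]
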